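/- arXiv:2309.02770 — 2 statements merged into one kernel-verified Lean document; each statement's English description precedes it below -/
import Mathlib

section
/- Let (Σ, μ) be a measure space, let a, b, f : Σ → ℝ be measurable with a(x) > 0 for μ-a.e. x, and suppose that the functions x ↦ a(x)·cosh(f(x)) − b(x)·f(x) and x ↦ √(a(x)² + b(x)²) − b(x)·arsinh(b(x)/a(x)) are both μ-integrable. Then ∫ (a·cosh(f) − b·f) dμ ≥ ∫ (√(a² + b²) − b·arsinh(b/a)) dμ, with equality if and only if f(x) = arsinh(b(x)/a(x)) for μ-a.e. x. -/
lemma cosh_key_val (a b : ℝ) (ha : 0 < a) :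
    a * Real.cosh (Real.arsinh (b / a)) = Real.sqrt (a ^ 2 + b ^ 2) := by
  rw [Real.cosh_arsinh]
  rw [show a = Real.sqrt (a ^ 2) from (Real.sqrt_sq ha.le).symm]
  rw [← Real.sqrt_mul (sq_nonneg a)]
  congr 1
  field_simp
  rw [Real.sq_sqrt (sq_nonneg a)]

lemma cosh_key (a b : ℝ) (ha : 0 < a) (t : ℝ) :
    Real.sqrt (a ^ 2 + b ^ 2) - b * Real.arsinh (b / a) ≤ a * Real.cosh t - b * t ∧
    (a * Real.cosh t - b * t = Real.sqrt (a ^ 2 + b ^ 2) - b * Real.arsinh (b / a) ↔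
      t = Real.arsinh (b / a)) := by
  set t₀ := Real.arsinh (b / a) with ht₀
  have hb : a * Real.sinh t₀ = b := by
    rw [ht₀, Real.sinh_arsinh]; field_simp
  set g : ℝ → ℝ := fun t => a * Real.cosh t - b * t with hg
  have hval : g t₀ = Real.sqrt (a ^ 2 + b ^ 2) - b * t₀ := by
    simp only [hg, ht₀, cosh_key_val a b ha]
  have hderiv : ∀ t : ℝ, HasDerivAt g (a * Real.sinh t - b) t := by
    intro t
    have h1 := (Real.hasDerivAt_cosh t).const_mul a
    have h2 := (hasDerivAt_id t).const_mul b
    have h3 := h1.sub h2; simp only [mul_one] at h3; exact h3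
  have hcont : Continuous g := by
    fun_prop
  have hmono : StrictMonoOn g (Set.Ici t₀) := by
    apply strictMonoOn_of_deriv_pos (convex_Ici _) hcont.continuousOn
    intro t ht
    rw [interior_Ici] at ht
    rw [(hderiv t).deriv]
    have : Real.sinh t₀ < Real.sinh t := Real.sinh_lt_sinh.2 ht
    nlinarith
  have hanti : StrictAntiOn g (Set.Iic t₀) := by
    apply strictAntiOn_of_deriv_neg (convex_Iic _) hcont.continuousOn
    intro t ht
    rw [interior_Iic] at ht
    rw [(hderiv t).deriv]
    have : Real.sinh t < Real.sinh t₀ := Real.sinh_lt_sinh.2 ht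
    nlinarith
  have hmin : ∀ t : ℝ, t ≠ t₀ → g t₀ < g t := by
    intro t hne
    rcases lt_or_gt_of_ne hne with h | h
    · exact hanti (Set.mem_Iic.2 h.le) (Set.mem_Iic.2 le_rfl) h
    · exact hmono (Set.mem_Ici.2 le_rfl) (Set.mem_Ici.2 h.le) h
  simp only [hg] at hval hmin
  constructor
  · rcases eq_or_ne t t₀ with rfl | hne
    · rw [hval]
    · linarith [hmin t hne]
  · constructor
    · intro heq
      by_contra hne
      have := hmin t hne
      rw [hval] at this
      linarith
    · intro rfl'
      rw [rfl', hval]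

open MeasureTheory

/-- Integral form of the optimal-frame minimization (Lemma 2.4): for
measurable `a, b, f` with `a > 0` a.e. and both integrands integrable,
`∫ (a cosh f - b f) dμ ≥ ∫ (√(a² + b²) - b arsinh(b/a)) dμ`, with equality
iff `f = arsinh (b / a)` almost everywhere. -/
theorem integral_a_cosh_sub_b_mul_ge {S : Type*} [MeasurableSpace S]
    (μ : Measure S) (a b f : S → ℝ)
    (ha_meas : Measurable a) (hb_meas : Measurable b) (hf_meas : Measurable f)
    (ha_pos : ∀ᵐ x ∂μ, 0 < a x)
    (hint₁ : Integrable (fun x => a x * Real.cosh (f x) - b x * f x) μ)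
    (hint₂ : Integrable (fun x =>
      Real.sqrt ((a x) ^ 2 + (b x) ^ 2) - b x * Real.arsinh (b x / a x)) μ) :
    (∫ x, (Real.sqrt ((a x) ^ 2 + (b x) ^ 2)
        - b x * Real.arsinh (b x / a x)) ∂μ) ≤
      (∫ x, (a x * Real.cosh (f x) - b x * f x) ∂μ) ∧
    ((∫ x, (a x * Real.cosh (f x) - b x * f x) ∂μ) =
        (∫ x, (Real.sqrt ((a x) ^ 2 + (b x) ^ 2)
          - b x * Real.arsinh (b x / a x)) ∂μ) ↔
      ∀ᵐ x ∂μ, f x = Real.arsinh (b x / a x)) := by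
  have hle : ∀ᵐ x ∂μ, Real.sqrt ((a x) ^ 2 + (b x) ^ 2)
      - b x * Real.arsinh (b x / a x) ≤ a x * Real.cosh (f x) - b x * f x := by
    filter_upwards [ha_pos] with x hx
    exact (cosh_key (a x) (b x) hx (f x)).1
  have hmain : (∫ x, (Real.sqrt ((a x) ^ 2 + (b x) ^ 2)
      - b x * Real.arsinh (b x / a x)) ∂μ) ≤
      (∫ x, (a x * Real.cosh (f x) - b x * f x) ∂μ) :=
    integral_mono_ae hint₂ hint₁ hle
  refine ⟨hmain, ?_, ?_⟩
  · intro heq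
    have hzero : (∫ x, ((a x * Real.cosh (f x) - b x * f x)
        - (Real.sqrt ((a x) ^ 2 + (b x) ^ 2) - b x * Real.arsinh (b x / a x))) ∂μ) = 0 := by
      rw [integral_sub hint₁ hint₂, heq, sub_self]
    have hnn : 0 ≤ᵐ[μ] fun x => (a x * Real.cosh (f x) - b x * f x)
        - (Real.sqrt ((a x) ^ 2 + (b x) ^ 2) - b x * Real.arsinh (b x / a x)) := by
      filter_upwards [hle] with x hx
      simpa using sub_nonneg.2 hx
    have := (integral_eq_zero_iff_of_nonneg_ae hnn (hint₁.sub hint₂)).1 hzero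
    filter_upwards [ha_pos, this] with x hx hx2
    have heqx : a x * Real.cosh (f x) - b x * f x
        = Real.sqrt ((a x) ^ 2 + (b x) ^ 2) - b x * Real.arsinh (b x / a x) := by
      have : (a x * Real.cosh (f x) - b x * f x)
        - (Real.sqrt ((a x) ^ 2 + (b x) ^ 2) - b x * Real.arsinh (b x / a x)) = 0 := hx2
      linarith
    exact (cosh_key (a x) (b x) hx (f x)).2.1 heqx
  · intro hae
    apply integral_congr_ae
    filter_upwards [ha_pos, hae] with x hx hfx
    exact (cosh_key (a x) (b x) hx (f x)).2.2 hfx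
end

section
/- Let Ω ⊆ ℝⁿ be an open connected set, let u, v : Ω → ℝ be twice continuously differentiable, and let k be a continuous map from Ω to real n×n matrices such that D²u(x) = −‖Du(x)‖·k(x) and D²v(x) = −‖Dv(x)‖·k(x) for all x ∈ Ω. If c > 0 and Du(x₁) = c·Dv(x₁) at some point x₁ ∈ Ω, then Du(x) = c·Dv(x) for every x ∈ Ω. -/
open Set Metric Real

theorem local_vanish {E F : Type*} [NormedAddCommGroup E] [NormedSpace ℝ E]
    [NormedAddCommGroup F] [NormedSpace ℝ F]
    {G : E → F} {G' : E → (E →L[ℝ] F)} {x₀ : E} {r K : ℝ}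
    (hG : ∀ y ∈ closedBall x₀ r, HasFDerivAt G (G' y) y)
    (hK : ∀ y ∈ closedBall x₀ r, ‖G' y‖ ≤ K * ‖G y‖)
    (h0 : G x₀ = 0) : ∀ x ∈ closedBall x₀ r, G x = 0 := by
  intro x hx
  set d := x - x₀ with hd
  set p : ℝ → E := fun t => x₀ + t • d with hp
  have hpmem : ∀ t ∈ Icc (0:ℝ) 1, p t ∈ closedBall x₀ r := by
    intro t ht
    have : ‖p t - x₀‖ = |t| * ‖d‖ := by
      simp [hp, norm_smul, abs_of_nonneg ht.1]
    rw [mem_closedBall, dist_eq_norm, this]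
    have h1 : |t| ≤ 1 := abs_le.2 ⟨by linarith [ht.1], ht.2⟩
    have h2 : ‖d‖ ≤ r := by
      have := mem_closedBall.1 hx; rwa [dist_eq_norm] at this
    calc |t| * ‖d‖ ≤ 1 * ‖d‖ := by
          apply mul_le_mul_of_nonneg_right h1 (norm_nonneg _)
      _ ≤ r := by simpa using h2
  set f : ℝ → F := fun t => G (p t) with hf
  have hderiv : ∀ t ∈ Icc (0:ℝ) 1, HasDerivAt f ((G' (p t)) d) t := by
    intro t ht
    have hpt : HasDerivAt p d t := by
      simpa [hp] using ((hasDerivAt_id t).smul_const d).const_add x₀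
    exact (hG (p t) (hpmem t ht)).comp_hasDerivAt t hpt
  have hcont : ContinuousOn f (Icc 0 1) := fun t ht =>
    (hderiv t ht).continuousAt.continuousWithinAt
  have hbound : ∀ t ∈ Ico (0:ℝ) 1, ‖(G' (p t)) d‖ ≤ (K * ‖d‖) * ‖f t‖ + 0 := by
    intro t ht
    have htI : t ∈ Icc (0:ℝ) 1 := ⟨ht.1, le_of_lt ht.2⟩
    calc ‖(G' (p t)) d‖ ≤ ‖G' (p t)‖ * ‖d‖ := (G' (p t)).le_opNorm d
      _ ≤ (K * ‖G (p t)‖) * ‖d‖ :=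
          mul_le_mul_of_nonneg_right (hK _ (hpmem t htI)) (norm_nonneg _)
      _ = (K * ‖d‖) * ‖f t‖ + 0 := by simp only [hf]; ring
  have h0' : ‖f 0‖ ≤ 0 := by simp [hf, hp, h0]
  have := norm_le_gronwallBound_of_norm_deriv_right_le hcont
    (fun t ht => (hderiv t ⟨ht.1, le_of_lt ht.2⟩).hasDerivWithinAt)
    h0' hbound 1 ⟨zero_le_one, le_refl 1⟩
  rw [gronwallBound_ε0_δ0] at this
  have : f 1 = 0 := norm_le_zero_iff.1 this
  simpa [hf, hp, hd] using this

set_option maxHeartbeats 1000000 in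
set_option synthInstance.maxHeartbeats 1000000 in
/-- Propagation of gradient proportionality: if `D²u = -‖Du‖ k` and
`D²v = -‖Dv‖ k` on an open connected set `Ω` with `k` continuous, `c > 0`,
and `Du(x₁) = c Dv(x₁)` at some `x₁ ∈ Ω`, then `Du = c Dv` on all of `Ω`. -/
theorem gradient_proportionality_propagates {n : ℕ}
    (Ω : Set (EuclideanSpace ℝ (Fin n))) (hΩ : IsOpen Ω)
    (hconn : IsConnected Ω)
    (u v : EuclideanSpace ℝ (Fin n) → ℝ)
    (hu : ContDiffOn ℝ 2 u Ω) (hv : ContDiffOn ℝ 2 v Ω)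
    (k : EuclideanSpace ℝ (Fin n) →
      (EuclideanSpace ℝ (Fin n) →L[ℝ] EuclideanSpace ℝ (Fin n) →L[ℝ] ℝ))
    (hk_cont : ContinuousOn k Ω)
    (hku : ∀ x ∈ Ω, fderiv ℝ (fderiv ℝ u) x = -(‖fderiv ℝ u x‖) • k x)
    (hkv : ∀ x ∈ Ω, fderiv ℝ (fderiv ℝ v) x = -(‖fderiv ℝ v x‖) • k x)
    (c : ℝ) (hc : 0 < c) (x₁ : EuclideanSpace ℝ (Fin n)) (hx₁ : x₁ ∈ Ω)
    (hprop : fderiv ℝ u x₁ = c • fderiv ℝ v x₁) :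
    ∀ x ∈ Ω, fderiv ℝ u x = c • fderiv ℝ v x := by
  set G : EuclideanSpace ℝ (Fin n) → (EuclideanSpace ℝ (Fin n) →L[ℝ] ℝ) :=
    fun y => fderiv ℝ u y - c • fderiv ℝ v y with hG
  -- derivative of G on Ω
  have hGderiv : ∀ y ∈ Ω,
      HasFDerivAt G ((c * ‖fderiv ℝ v y‖ - ‖fderiv ℝ u y‖) • k y) y := by
    intro y hy
    have hyn : Ω ∈ nhds y := hΩ.mem_nhds hy
    have hu2 : ContDiffAt ℝ 2 u y := hu.contDiffAt hyn
    have hv2 : ContDiffAt ℝ 2 v y := hv.contDiffAt hyn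
    have hAu : HasFDerivAt (fderiv ℝ u) (fderiv ℝ (fderiv ℝ u) y) y :=
      ((hu2.fderiv_right (le_refl 2)).differentiableAt one_ne_zero).hasFDerivAt
    have hAv : HasFDerivAt (fderiv ℝ v) (fderiv ℝ (fderiv ℝ v) y) y :=
      ((hv2.fderiv_right (le_refl 2)).differentiableAt one_ne_zero).hasFDerivAt
    have h := hAu.sub (hAv.const_smul c)
    rw [hku y hy, hkv y hy] at h
    have heq : (-(‖fderiv ℝ u y‖) • k y) - c • (-(‖fderiv ℝ v y‖) • k y)
        = (c * ‖fderiv ℝ v y‖ - ‖fderiv ℝ u y‖) • k y := by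
      rw [smul_smul]; module
    rw [heq] at h
    exact h
  -- the norm bound
  have hGnorm : ∀ y ∈ Ω, ∀ B : ℝ, ‖k y‖ ≤ B →
      ‖(c * ‖fderiv ℝ v y‖ - ‖fderiv ℝ u y‖) • k y‖ ≤ B * ‖G y‖ := by
    intro y hy B hB
    have h1 : |c * ‖fderiv ℝ v y‖ - ‖fderiv ℝ u y‖| ≤ ‖G y‖ := by
      have hcv : c * ‖fderiv ℝ v y‖ = ‖c • fderiv ℝ v y‖ := by
        rw [norm_smul, Real.norm_eq_abs, abs_of_pos hc]
      rw [hcv, abs_sub_comm]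
      exact abs_norm_sub_norm_le _ _
    have h2 := ContinuousLinearMap.opNorm_smul_le
      (c * ‖fderiv ℝ v y‖ - ‖fderiv ℝ u y‖) (k y)
    rw [Real.norm_eq_abs] at h2
    have hk0 : (0:ℝ) ≤ ‖k y‖ := ContinuousLinearMap.opNorm_nonneg _
    calc ‖(c * ‖fderiv ℝ v y‖ - ‖fderiv ℝ u y‖) • k y‖
        ≤ |c * ‖fderiv ℝ v y‖ - ‖fderiv ℝ u y‖| * ‖k y‖ := h2
      _ ≤ ‖G y‖ * B := by
          apply mul_le_mul h1 hB hk0 (norm_nonneg _)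
      _ = B * ‖G y‖ := mul_comm _ _
  -- S is open
  set S : Set (EuclideanSpace ℝ (Fin n)) := {x | x ∈ Ω ∧ G x = 0} with hS
  have hSopen : IsOpen S := by
    rw [Metric.isOpen_iff]
    rintro x₀ ⟨hx₀Ω, hx₀⟩
    -- local bound on ‖k‖ near x₀
    obtain ⟨ε, hε, hkb⟩ : ∃ ε > 0, ∀ y ∈ ball x₀ ε, ‖k y‖ ≤ ‖k x₀‖ + 1 := by
      have hca : ContinuousAt k x₀ := hk_cont.continuousAt (hΩ.mem_nhds hx₀Ω)
      have hev : ∀ᶠ y in nhds x₀, k y ∈ ball (k x₀) 1 :=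
        hca.preimage_mem_nhds (@ball_mem_nhds _ ContinuousLinearMap.toPseudoMetricSpace (k x₀) 1 one_pos)
      obtain ⟨ε, hε, hb⟩ := Metric.eventually_nhds_iff_ball.1 hev
      refine ⟨ε, hε, fun y hy => ?_⟩
      have h1 := mem_ball.1 (hb y hy)
      have h1' : ‖k y - k x₀‖ < 1 := by
        rw [← @dist_eq_norm _
          ContinuousLinearMap.toSeminormedAddCommGroup (k y) (k x₀)]
        exact h1
      have h2 := @norm_sub_norm_le _
        ContinuousLinearMap.toSeminormedAddCommGroup (k y) (k x₀)
      linarith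
    obtain ⟨r, hr, hball⟩ := Metric.nhds_basis_closedBall.mem_iff.1 (hΩ.mem_nhds hx₀Ω)
    set ρ : ℝ := min r (ε / 2) with hρdef
    have hρ : 0 < ρ := lt_min hr (by linarith)
    have hsubΩ : closedBall x₀ ρ ⊆ Ω :=
      (closedBall_subset_closedBall (min_le_left _ _)).trans hball
    have hsubB : closedBall x₀ ρ ⊆ ball x₀ ε :=
      (closedBall_subset_closedBall (min_le_right _ _)).trans
        (closedBall_subset_ball (by linarith))
    refine ⟨ρ, hρ, fun x hx => ?_⟩
    have hxc : x ∈ closedBall x₀ ρ := ball_subset_closedBall hx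
    refine ⟨hsubΩ hxc, ?_⟩
    exact local_vanish (G' := fun y => (c * ‖fderiv ℝ v y‖ - ‖fderiv ℝ u y‖) • k y)
      (fun y hy => hGderiv y (hsubΩ hy))
      (fun y hy => hGnorm y (hsubΩ hy) (‖k x₀‖ + 1) (hkb y (hsubB hy)))
      hx₀ x hxc
  -- T is open
  have hGcont : ContinuousOn G Ω := by
    have h1 := hu.continuousOn_fderiv_of_isOpen hΩ one_le_two
    have h2 := hv.continuousOn_fderiv_of_isOpen hΩ one_le_two
    exact h1.sub (h2.const_smul c)
  have hTopen : IsOpen (Ω ∩ G ⁻¹' ({0}ᶜ)) :=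
    hGcont.isOpen_inter_preimage hΩ isClosed_singleton.isOpen_compl
  -- connectedness argument
  have hsub : Ω ⊆ S := by
    apply hconn.isPreconnected.subset_left_of_subset_union hSopen hTopen
    · rw [Set.disjoint_iff]
      rintro x ⟨⟨-, hx0⟩, -, hx0'⟩
      exact hx0' hx0
    · intro x hx
      by_cases h : G x = 0
      · exact Or.inl ⟨hx, h⟩
      · exact Or.inr ⟨hx, h⟩
    · refine ⟨x₁, hx₁, hx₁, ?_⟩
      simp only [hG]
      rw [hprop, sub_self]
  intro x hx
  have := (hsub hx).2
  simpa [hG, sub_eq_zero] using this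
end
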